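/- Let X be a nonempty zero-dimensional T1 topological space, let 2 = {0,1} carry the discrete topology, let C(X,2) be the set of continuous maps from X to 2, and let e : X → 2^{C(X,2)} be the evaluation map e(x)(f) = f(x). Then e is a homeomorphic embedding, the closure K of e[X] in the product space 2^{C(X,2)} is a compact zero-dimensional Hausdorff space, and the pair ⟨K, e⟩ is a Banaschewski compactification of X: for every compact zero-dimensional T1 space Z and every continuous g : X → Z there exists a continuous g̃ : K → Z with g̃ ∘ e = g. -/

import Mathlib

open Topology TopologicalSpace Set

universe u v

/-- The evaluation map `x ↦ (f ↦ f x)` from `X` into the Cantor cube `2^{C(X,2)}`,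
where `2 = Bool` carries the discrete topology. -/
def boolEval (X : Type u) [TopologicalSpace X] : X → (C(X, Bool) → Bool) :=
  fun x f => f x

/-- The corestriction of the evaluation map to the closure of its range. -/
def boolEvalK (X : Type u) [TopologicalSpace X] :
    X → ↥(closure (Set.range (boolEval X))) :=
  fun x => ⟨boolEval X x, subset_closure ⟨x, rfl⟩⟩

lemma boolEval_continuous (Y : Type*) [TopologicalSpace Y] : Continuous (boolEval Y) :=
  continuous_pi fun f => f.continuous

lemma boolEval_isEmbedding {Y : Type*} [TopologicalSpace Y] [T1Space Y]
    (h : IsTopologicalBasis {s : Set Y | IsClopen s}) : IsEmbedding (boolEval Y) := by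
  constructor
  · refine isInducing_iff_nhds.mpr fun x => le_antisymm ((boolEval_continuous Y).tendsto x).le_comap ?_
    · intro s hs
      obtain ⟨t, ht, hxt, hts⟩ := h.mem_nhds_iff.mp hs
      have hcont : Continuous t.boolIndicator :=
        (continuous_boolIndicator_iff_isClopen t).mpr ht
      refine Filter.mem_comap.mpr ⟨{u | u ⟨t.boolIndicator, hcont⟩ = true}, ?_, ?_⟩
      · refine IsOpen.mem_nhds ?_ ((t.mem_iff_boolIndicator x).mp hxt)
        have hc : Continuous (fun u : C(Y, Bool) → Bool => u ⟨t.boolIndicator, hcont⟩) :=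
          continuous_apply _
        have hop : IsOpen ({true} : Set Bool) := isOpen_discrete _
        exact hop.preimage hc
      · intro y hy
        exact hts ((t.mem_iff_boolIndicator y).mpr hy)
  · intro x y hxy
    by_contra hne
    obtain ⟨t, ht, hxt, hts⟩ := h.mem_nhds_iff.mp
      (isOpen_compl_singleton.mem_nhds (by simpa using hne) : ({y}ᶜ : Set Y) ∈ 𝓝 x)
    have hcont : Continuous t.boolIndicator :=
      (continuous_boolIndicator_iff_isClopen t).mpr ht
    have hyt : y ∉ t := fun hy => (hts hy) rfl
    have : t.boolIndicator x = t.boolIndicator y := congrFun hxy ⟨t.boolIndicator, hcont⟩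
    rw [(t.mem_iff_boolIndicator x).mp hxt, ((t.notMem_iff_boolIndicator y).mp hyt)] at this
    exact Bool.noConfusion this

lemma t2_of_clopen_basis {Y : Type*} [TopologicalSpace Y] [T1Space Y]
    (h : IsTopologicalBasis {s : Set Y | IsClopen s}) : T2Space Y := by
  constructor
  intro x y hne
  obtain ⟨t, ht, hxt, hts⟩ := h.mem_nhds_iff.mp
    (isOpen_compl_singleton.mem_nhds (by simpa using hne) : ({y}ᶜ : Set Y) ∈ 𝓝 x)
  exact ⟨t, tᶜ, ht.2, ht.compl.2, hxt, fun hy => (hts hy) rfl,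
    disjoint_compl_right⟩

/-- For a compact space, the range of the evaluation map is closed. -/
lemma boolEval_range_isClosed (Y : Type*) [TopologicalSpace Y] [CompactSpace Y] :
    IsClosed (Set.range (boolEval Y)) :=
  (isCompact_range (boolEval_continuous Y)).isClosed

theorem stmt0 (X : Type u) [TopologicalSpace X] [Nonempty X] [T1Space X]
    (hzd : IsTopologicalBasis {s : Set X | IsClopen s}) :
    IsEmbedding (boolEval X) ∧
    IsCompact (closure (Set.range (boolEval X))) ∧
    T2Space ↥(closure (Set.range (boolEval X))) ∧
    IsTopologicalBasis {s : Set ↥(closure (Set.range (boolEval X))) | IsClopen s} ∧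
    DenseRange (boolEvalK X) ∧
    (∀ (Z : Type v) [TopologicalSpace Z] [CompactSpace Z] [T1Space Z],
      IsTopologicalBasis {s : Set Z | IsClopen s} →
      ∀ g : C(X, Z), ∃ g' : C(↥(closure (Set.range (boolEval X))), Z),
        ∀ x : X, g' (boolEvalK X x) = g x) := by
  set K := closure (Set.range (boolEval X)) with hK
  have hKcompact : IsCompact K := isClosed_closure.isCompact
  have hKcs : CompactSpace K := isCompact_iff_compactSpace.mp hKcompact
  refine ⟨boolEval_isEmbedding hzd, hKcompact, inferInstance, ?_, ?_, ?_⟩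
  · exact isTopologicalBasis_isClopen
  · -- dense range
    rw [DenseRange, dense_iff_closure_eq]
    have := IsInducing.subtypeVal (t := K) |>.closure_eq_preimage_closure_image
      (Set.range (boolEvalK X))
    rw [this]
    have himg : Subtype.val '' Set.range (boolEvalK X) = Set.range (boolEval X) := by
      ext u
      constructor
      · rintro ⟨⟨v, hv⟩, ⟨x, hx⟩, rfl⟩
        exact ⟨x, congrArg Subtype.val hx⟩
      · rintro ⟨x, rfl⟩
        exact ⟨boolEvalK X x, ⟨x, rfl⟩, rfl⟩
    rw [himg]
    ext ⟨u, hu⟩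
    simp [hu]; exact hu
  · intro Z _ _ _ hZb g
    haveI : T2Space Z := t2_of_clopen_basis hZb
    -- the induced map between cubes
    set Φ : (C(X, Bool) → Bool) → (C(Z, Bool) → Bool) := fun u h => u (h.comp g) with hΦ
    have hΦcont : Continuous Φ := continuous_pi fun h => continuous_apply _
    have hΦcomm : ∀ x : X, Φ (boolEval X x) = boolEval Z (g x) := fun x => rfl
    have hΦmaps : ∀ k : K, Φ k.1 ∈ Set.range (boolEval Z) := by
      rintro ⟨u, hu⟩
      have h1 : Φ '' K ⊆ closure (Φ '' Set.range (boolEval X)) :=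
        image_closure_subset_closure_image hΦcont
      have h2 : Φ '' Set.range (boolEval X) ⊆ Set.range (boolEval Z) := by
        rintro _ ⟨_, ⟨x, rfl⟩, rfl⟩
        exact ⟨g x, rfl⟩
      have h3 : Φ u ∈ closure (Set.range (boolEval Z)) :=
        closure_mono h2 (h1 ⟨u, hu, rfl⟩)
      rwa [(boolEval_range_isClosed Z).closure_eq] at h3
    have hZemb := boolEval_isEmbedding hZb
    let eZ := hZemb.toHomeomorph
    refine ⟨⟨fun k => eZ.symm ⟨Φ k.1, hΦmaps k⟩, ?_⟩, ?_⟩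
    · exact eZ.symm.continuous.comp ((hΦcont.comp continuous_subtype_val).subtype_mk _)
    · intro x
      have : (⟨Φ (boolEvalK X x).1, hΦmaps _⟩ : Set.range (boolEval Z)) = eZ (g x) := by
        apply Subtype.ext
        exact hΦcomm x
      simp only [ContinuousMap.coe_mk, this, Homeomorph.symm_apply_apply]
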